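/- Let 0 ≤ α < 1, β ≥ 0, γ ≥ 0 with β + γ > 0, and let p, n be positive integers. If f is analytic on the open unit disk D with f(z) = z^p + a_{n+p} z^{n+p} + ⋯ and |f'(z)/(p z^{p−1}) − 1|^β · |f''(z)/z^{p−2} − (p−1) f'(z)/z^{p−1}|^γ < (pn)^γ (1−α)^{β+γ} / 2^{β+2γ} for all z ∈ D, then Re(f'(z)/(p z^{p−1})) > (1+α)/2 for all z ∈ D. -/

import Mathlib

open Complex Metric

private lemma endpoint_re_nonneg (g : ℂ → ℂ) (z g' : ℂ) (hg : HasDerivAt g g' z)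
    (hmax : ∀ t : ℝ, t ∈ Set.Icc (0:ℝ) 1 → ‖g ((t:ℂ) * z)‖ ≤ ‖g z‖) :
    0 ≤ ((starRingEnd ℂ) (g z) * (z * g')).re := by
  have hc : HasDerivAt (fun t : ℝ => g ((t:ℂ) * z)) (z * g') 1 := by
    have h1 : HasDerivAt (fun t : ℝ => (t:ℂ) * z) z 1 := by
      simpa using ((hasDerivAt_id (1:ℝ)).ofReal_comp.mul_const z)
    have hg' : HasDerivAt g g' (((1:ℝ):ℂ) * z) := by
      rwa [show (((1:ℝ):ℂ) * z) = z by simp]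
    have h2 : HasDerivAt (g ∘ fun t : ℝ => (t:ℂ) * z) (z • g') 1 :=
      HasDerivAt.scomp (h := fun t : ℝ => (t:ℂ) * z) (x := (1:ℝ)) hg' h1
    rw [smul_eq_mul] at h2
    exact h2
  have hcj : HasDerivAt (fun t : ℝ => (starRingEnd ℂ) (g ((t:ℂ) * z)))
      ((starRingEnd ℂ) (z * g')) 1 := by
    exact hc.star
  have hmul : HasDerivAt (fun t : ℝ => (starRingEnd ℂ) (g ((t:ℂ)*z)) * g ((t:ℂ)*z))
      ((starRingEnd ℂ) (z*g') * g z + (starRingEnd ℂ) (g z) * (z*g')) 1 := by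
    have h4 := hcj.mul hc
    beta_reduce at h4
    rw [Complex.ofReal_one, one_mul] at h4
    exact h4
  have hφ : HasDerivAt (fun t : ℝ => ((starRingEnd ℂ) (g ((t:ℂ)*z)) * g ((t:ℂ)*z)).re)
      ((starRingEnd ℂ) (z*g') * g z + (starRingEnd ℂ) (g z) * (z*g')).re 1 :=
    Complex.reCLM.hasFDerivAt.comp_hasDerivAt 1 hmul
  set D : ℝ := ((starRingEnd ℂ) (z*g') * g z + (starRingEnd ℂ) (g z) * (z*g')).re with hD
  set φ : ℝ → ℝ := fun t : ℝ => ((starRingEnd ℂ) (g ((t:ℂ)*z)) * g ((t:ℂ)*z)).re with hφdef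
  have hsq : ∀ x : ℂ, ((starRingEnd ℂ) x * x).re = ‖x‖ ^ 2 := by
    intro x
    rw [show (starRingEnd ℂ) x * x = x * (starRingEnd ℂ) x by ring, Complex.mul_conj]
    simp [Complex.sq_norm]
  have hle : ∀ t : ℝ, t ∈ Set.Icc (0:ℝ) 1 → φ t ≤ φ 1 := by
    intro t ht
    have := hmax t ht
    simp only [hφdef, hsq, Complex.ofReal_one, one_mul]
    exact pow_le_pow_left₀ (norm_nonneg _) this 2
  have hDnn : 0 ≤ D := by
    have hT : Filter.Tendsto (slope φ 1) (nhdsWithin 1 (Set.Iio 1)) (nhds D) :=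
      (hasDerivAt_iff_tendsto_slope.1 hφ).mono_left
        (nhdsWithin_mono 1 fun x hx => ne_of_lt hx)
    refine ge_of_tendsto hT ?_
    filter_upwards [Ioo_mem_nhdsLT_of_mem (Set.right_mem_Ioc.2 one_pos)] with t ht
    have h1 : φ t ≤ φ 1 := hle t ⟨ht.1.le, ht.2.le⟩
    have h2 : t - 1 < 0 := by linarith [ht.2]
    rw [slope_def_field, show φ t - φ 1 = -(φ 1 - φ t) by ring,
      show t - 1 = -(1 - t) by ring, neg_div_neg_eq]
    exact div_nonneg (by linarith) (by linarith)
  have hsym : ((starRingEnd ℂ) (z*g') * g z).re = ((starRingEnd ℂ) (g z) * (z*g')).re := by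
    simp only [Complex.mul_re, Complex.conj_re, Complex.conj_im]
    ring
  rw [hD, Complex.add_re] at hDnn
  linarith [hDnn, hsym]

private lemma derivFormula1 {n p : ℕ} {a f : ℂ → ℂ} (ha : DifferentiableOn ℂ a (ball 0 1))
    (hform : ∀ w ∈ ball (0:ℂ) 1, f w = w ^ p + w ^ (n + p) * a w) :
    ∀ w ∈ ball (0:ℂ) 1, deriv f w =
      (p:ℂ) * w^(p-1) + ((n+p:ℕ) * w^(n+p-1) * a w + w^(n+p) * deriv a w) := by
  intro w hw
  have hmem := isOpen_ball.mem_nhds hw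
  have hev : f =ᶠ[nhds w] fun x => x ^ p + x ^ (n+p) * a x :=
    Filter.eventuallyEq_of_mem hmem fun x hx => hform x hx
  rw [hev.deriv_eq]
  exact ((hasDerivAt_pow p w).add
    ((hasDerivAt_pow (n+p) w).mul ((ha.differentiableAt hmem).hasDerivAt))).deriv

private lemma derivFormula2 {n p : ℕ} {a f : ℂ → ℂ} (ha : DifferentiableOn ℂ a (ball 0 1))
    (hform : ∀ w ∈ ball (0:ℂ) 1, f w = w ^ p + w ^ (n + p) * a w) :
    ∀ w ∈ ball (0:ℂ) 1, deriv (deriv f) w =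
      (p:ℂ) * ((p-1:ℕ) * w^(p-1-1)) +
        (((n+p:ℕ) * ((n+p-1:ℕ) * w^(n+p-1-1)) * a w + (n+p:ℕ) * w^(n+p-1) * deriv a w) +
          ((n+p:ℕ) * w^(n+p-1) * deriv a w + w^(n+p) * deriv (deriv a) w)) := by
  intro w hw
  have hmem := isOpen_ball.mem_nhds hw
  have hev : deriv f =ᶠ[nhds w]
      fun x => (p:ℂ) * x^(p-1) + ((n+p:ℕ) * x^(n+p-1) * a x + x^(n+p) * deriv a x) :=
    Filter.eventuallyEq_of_mem (isOpen_ball.mem_nhds hw)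
      fun x hx => derivFormula1 ha hform x hx
  rw [hev.deriv_eq]
  have h1 : HasDerivAt a (deriv a w) w := (ha.differentiableAt hmem).hasDerivAt
  have hd : DifferentiableOn ℂ (deriv a) (ball 0 1) :=
    ((ha.analyticOnNhd isOpen_ball).deriv).differentiableOn
  have h2 : HasDerivAt (deriv a) (deriv (deriv a) w) w := (hd.differentiableAt hmem).hasDerivAt
  exact (((hasDerivAt_pow (p-1) w).const_mul (p:ℂ)).add
    ((((hasDerivAt_pow (n+p-1) w).const_mul ((n+p:ℕ):ℂ)).mul h1).add
      ((hasDerivAt_pow (n+p) w).mul h2))).deriv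

private lemma id1 (p n : ℕ) (hp : 1 ≤ p) (w A A' : ℂ) (hw : w ≠ 0) :
    ((p:ℂ) * w^(p-1) + ((n+p:ℕ) * w^(n+p-1) * A + w^(n+p) * A')) / ((p:ℂ) * w^((p:ℤ)-1)) - 1
      = w^n * (((n+p:ℕ) * A + w * A') / (p:ℂ)) := by
  obtain ⟨q, rfl⟩ := Nat.exists_eq_add_of_le hp
  have hzp : w^(((1+q:ℕ):ℤ)-1) = w^q := by
    rw [show ((1+q:ℕ):ℤ)-1 = ((q:ℕ):ℤ) by push_cast; ring, zpow_natCast]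
  have hp0 : ((1+q:ℕ):ℂ) ≠ 0 := Nat.cast_ne_zero.2 (by omega)
  rw [hzp, show (1+q) - 1 = q from by omega, show n + (1+q) - 1 = n + q from by omega]
  have hp0' : (1:ℂ) + (q:ℂ) ≠ 0 := by exact_mod_cast hp0
  rw [div_sub_one (by exact mul_ne_zero hp0 (pow_ne_zero _ hw)),
    div_eq_iff (by exact mul_ne_zero hp0 (pow_ne_zero _ hw))]
  field_simp [hp0']
  push_cast
  ring

private lemma id2 (p n : ℕ) (hp : 1 ≤ p) (hn : 1 ≤ n) (w A A' A'' : ℂ) (hw : w ≠ 0) :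
    ((p:ℂ) * ((p-1:ℕ) * w^(p-1-1)) +
        (((n+p:ℕ) * ((n+p-1:ℕ) * w^(n+p-1-1)) * A + (n+p:ℕ) * w^(n+p-1) * A') +
          ((n+p:ℕ) * w^(n+p-1) * A' + w^(n+p) * A''))) / w^((p:ℤ)-2)
      - ((p:ℂ) - 1) * ((p:ℂ) * w^(p-1) + ((n+p:ℕ) * w^(n+p-1) * A + w^(n+p) * A')) / w^((p:ℤ)-1)
      = (p:ℂ) * (w^n * ((n:ℂ) * (((n+p:ℕ) * A + w * A') / (p:ℂ)) +
          w * (((n+p:ℕ) * A' + (1 * A' + w * A'')) / (p:ℂ)))) := by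
  obtain ⟨q, rfl⟩ := Nat.exists_eq_add_of_le hp
  obtain ⟨m, rfl⟩ := Nat.exists_eq_add_of_le hn
  have hp0 : ((1+q:ℕ):ℂ) ≠ 0 := Nat.cast_ne_zero.2 (by omega)
  rw [show (1+m) + (1+q) - 1 - 1 = m + q from by omega,
    show (1+q) - 1 = q from by omega, show (1+m) + (1+q) - 1 = 1+(m+q) from by omega]
  rcases q with _ | q'
  · rw [show ((1+0:ℕ):ℤ)-2 = (-1 : ℤ) by norm_num, show ((1+0:ℕ):ℤ)-1 = (0 : ℤ) by norm_num,
      zpow_neg_one, zpow_zero]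
    field_simp
    push_cast
    ring
  · rw [show ((1+(q'+1):ℕ):ℤ)-2 = ((q':ℕ):ℤ) by push_cast; ring,
      show ((1+(q'+1):ℕ):ℤ)-1 = ((q'+1:ℕ):ℤ) by push_cast; ring,
      zpow_natCast, zpow_natCast, show q'+1-1 = q' from by omega]
    have hp0' : (1:ℂ) + ((q':ℂ)+1) ≠ 0 := by exact_mod_cast hp0
    field_simp [hp0']
    push_cast
    ring

theorem stmt_2 (α β γ : ℝ) (hα0 : 0 ≤ α) (hα1 : α < 1) (hβ : 0 ≤ β) (hγ : 0 ≤ γ)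
    (hβγ : 0 < β + γ) (p n : ℕ) (hp : 1 ≤ p) (hn : 1 ≤ n)
    (f a : ℂ → ℂ) (hf : DifferentiableOn ℂ f (ball 0 1))
    (ha : DifferentiableOn ℂ a (ball 0 1))
    (hform : ∀ z ∈ ball (0:ℂ) 1, f z = z ^ p + z ^ (n + p) * a z)
    (hineq : ∀ z ∈ ball (0:ℂ) 1, z ≠ 0 →
      ‖deriv f z / (p * z ^ ((p : ℤ) - 1)) - 1‖ ^ β *
        ‖deriv (deriv f) z / z ^ ((p : ℤ) - 2) -
          (p - 1) * deriv f z / z ^ ((p : ℤ) - 1)‖ ^ γ <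
        ((p * n : ℝ)) ^ γ * (1 - α) ^ (β + γ) / 2 ^ (β + 2 * γ)) :
    ∀ z ∈ ball (0:ℂ) 1, z ≠ 0 →
      ((1 + α) / 2 : ℝ) < (deriv f z / (p * z ^ ((p : ℤ) - 1))).re := by
  intro z hz hz0
  have haO : AnalyticOnNhd ℂ a (ball 0 1) := ha.analyticOnNhd isOpen_ball
  have hd1 : DifferentiableOn ℂ (deriv a) (ball 0 1) := haO.deriv.differentiableOn
  have hF1 := derivFormula1 ha hform
  have hF2 := derivFormula2 ha hform
  set u : ℂ → ℂ := fun w => ((((n+p:ℕ)):ℂ) * a w + w * deriv a w) / (p:ℂ) with hu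
  have hu_diff : DifferentiableOn ℂ u (ball 0 1) := by
    rw [hu]
    exact ((ha.const_mul _).add (differentiableOn_id.mul hd1)).div_const _
  have hderivu : ∀ w ∈ ball (0:ℂ) 1, deriv u w =
      ((((n+p:ℕ)):ℂ) * deriv a w + (1 * deriv a w + w * deriv (deriv a) w)) / (p:ℂ) := by
    intro w hw
    have hmem := isOpen_ball.mem_nhds hw
    have h1 : HasDerivAt a (deriv a w) w := (ha.differentiableAt hmem).hasDerivAt
    have h2 : HasDerivAt (deriv a) (deriv (deriv a) w) w := (hd1.differentiableAt hmem).hasDerivAt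
    rw [hu]
    exact (((h1.const_mul (((n+p:ℕ)):ℂ)).add ((hasDerivAt_id w).mul h2)).div_const _).deriv
  have hI1 : ∀ w ∈ ball (0:ℂ) 1, w ≠ 0 →
      deriv f w / ((p:ℂ) * w^((p:ℤ)-1)) - 1 = w^n * u w := by
    intro w hw hw0
    rw [hF1 w hw, hu]
    exact id1 p n hp w (a w) (deriv a w) hw0
  have hI2 : ∀ w ∈ ball (0:ℂ) 1, w ≠ 0 →
      deriv (deriv f) w / w^((p:ℤ)-2) - ((p:ℂ) - 1) * deriv f w / w^((p:ℤ)-1)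
        = (p:ℂ) * (w^n * ((n:ℂ) * u w + w * deriv u w)) := by
    intro w hw hw0
    rw [hF1 w hw, hF2 w hw, hderivu w hw, hu]
    exact id2 p n hp hn w (a w) (deriv a w) (deriv (deriv a) w) hw0
  -- set up the radius and the max point
  have hz1 : ‖z‖ < 1 := by
    simpa [Complex.dist_eq] using mem_ball.1 hz
  obtain ⟨r, hr⟩ : ∃ r : ℝ, r = (‖z‖ + 1)/2 := ⟨_, rfl⟩
  have hr0 : 0 < r := by
    rw [hr]; positivity
  have hzr : ‖z‖ < r := by rw [hr]; linarith
  have hr1 : r < 1 := by rw [hr]; linarith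
  have hball_sub : ball (0:ℂ) r ⊆ ball 0 1 := ball_subset_ball (by linarith)
  have hclsub : closedBall (0:ℂ) r ⊆ ball 0 1 := closedBall_subset_ball hr1
  have hcl : closure (ball (0:ℂ) r) = closedBall 0 r := closure_ball 0 (ne_of_gt hr0)
  have hDC : DiffContOnCl ℂ u (ball 0 r) :=
    ⟨hu_diff.mono hball_sub, (hu_diff.continuousOn).mono (by rw [hcl]; exact hclsub)⟩
  obtain ⟨zs, hzsf, hzsmax⟩ :=
    Complex.exists_mem_frontier_isMaxOn_norm isBounded_ball ⟨0, mem_ball_self hr0⟩ hDC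
  rw [frontier_ball 0 (ne_of_gt hr0)] at hzsf
  rw [hcl] at hzsmax
  have hzs_abs : ‖zs‖ = r := by
    simpa [Complex.dist_eq] using hzsf
  have hzs0 : zs ≠ 0 := by
    intro h; rw [h] at hzs_abs; simp at hzs_abs; linarith
  have hzs1 : zs ∈ ball (0:ℂ) 1 := by
    rw [mem_ball_zero_iff, hzs_abs]; exact hr1
  obtain ⟨M, hM⟩ : ∃ m : ℝ, m = ‖u zs‖ := ⟨_, rfl⟩
  have hMz : ‖u z‖ ≤ M := by
    rw [hM]
    have hzmem : z ∈ closedBall (0:ℂ) r := by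
      rw [mem_closedBall_zero_iff]; exact hzr.le
    simpa using hzsmax hzmem
  have hdpos : (0:ℝ) < 1 - α := by linarith
  -- the target constant
  obtain ⟨ss, hss⟩ : ∃ s : ℝ, s = (β+2*γ)/(β+γ) := ⟨_, rfl⟩
  have hs1 : 1 ≤ ss := by rw [hss, le_div_iff₀ hβγ]; linarith
  obtain ⟨dd, hdd⟩ : ∃ d : ℝ, d = (1-α)/(2:ℝ)^ss := ⟨_, rfl⟩
  have hdd_pos : 0 < dd := by
    rw [hdd]; exact div_pos hdpos (Real.rpow_pos_of_pos two_pos ss)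
  have hdd_le : dd ≤ (1-α)/2 := by
    have h2s : (2:ℝ) ≤ (2:ℝ)^ss := by
      calc (2:ℝ) = (2:ℝ)^(1:ℝ) := (Real.rpow_one 2).symm
      _ ≤ (2:ℝ)^ss := Real.rpow_le_rpow_of_exponent_le one_le_two hs1
    rw [hdd, div_le_div_iff₀ (Real.rpow_pos_of_pos two_pos ss) two_pos]
    nlinarith
  have hdd_eq : dd^(β+γ) = (1-α)^(β+γ)/2^(β+2*γ) := by
    rw [hdd, Real.div_rpow hdpos.le (Real.rpow_pos_of_pos two_pos ss).le,
      ← Real.rpow_mul (by norm_num : (0:ℝ) ≤ 2)]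
    congr 1
    rw [hss]
    field_simp
  -- final step given the bound on |z^n * u z|
  have main : ‖z^n * u z‖ < (1-α)/2 → ((1 + α) / 2 : ℝ) < (deriv f z / (p * z ^ ((p : ℤ) - 1))).re := by
    intro habs
    have heq : deriv f z / ((p:ℂ) * z^((p:ℤ)-1)) = 1 + z^n * u z := by
      have := hI1 z hz hz0
      rw [sub_eq_iff_eq_add] at this
      rw [this]; ring
    rw [heq, Complex.add_re, Complex.one_re]
    have h1 : |(z^n * u z).re| ≤ ‖z^n * u z‖ := Complex.abs_re_le_norm _
    have h2 := neg_abs_le ((z^n * u z).re)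
    linarith
  by_cases hMc : M = 0
  · -- u vanishes on the ball
    apply main
    have : ‖u z‖ = 0 := le_antisymm (by rw [← hMc]; exact hMz) (norm_nonneg _)
    rw [norm_mul, this, mul_zero]
    linarith
  have hMpos : 0 < M := lt_of_le_of_ne (hM ▸ norm_nonneg _) (Ne.symm hMc)
  -- the boundary-point derivative inequality
  have hu_at : HasDerivAt u (deriv u zs) zs :=
    (hu_diff.differentiableAt (isOpen_ball.mem_nhds hzs1)).hasDerivAt
  have hre : 0 ≤ ((starRingEnd ℂ) (u zs) * (zs * deriv u zs)).re := by
    apply endpoint_re_nonneg u zs (deriv u zs) hu_at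
    intro t ht
    have hmem : ((t:ℂ) * zs) ∈ closedBall (0:ℂ) r := by
      rw [mem_closedBall_zero_iff, norm_mul, Complex.norm_real, Real.norm_eq_abs,
        _root_.abs_of_nonneg ht.1, hzs_abs]
      nlinarith [ht.2, hr0]
    simpa using hzsmax hmem
  -- lower bound for |n * u zs + zs * deriv u zs|
  obtain ⟨Bv, hBv⟩ : ∃ b : ℝ, b = ‖(n:ℂ) * u zs + zs * deriv u zs‖ := ⟨_, rfl⟩
  have hkey : (n:ℝ) * M ≤ Bv := by
    have h1 : ((starRingEnd ℂ) (u zs) * ((n:ℂ) * u zs)).re = (n:ℝ) * M^2 := by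
      rw [show (starRingEnd ℂ) (u zs) * ((n:ℂ) * u zs)
          = (n:ℂ) * (u zs * (starRingEnd ℂ) (u zs)) by ring, Complex.mul_conj]
      have : ((n:ℂ) * ((Complex.normSq (u zs) : ℝ) : ℂ)) = (((n * Complex.normSq (u zs) : ℝ)) : ℂ) := by
        push_cast; ring
      rw [this, Complex.ofReal_re, Complex.normSq_eq_norm_sq, ← hM]
    have h2 : ((starRingEnd ℂ) (u zs) * ((n:ℂ) * u zs + zs * deriv u zs)).re ≤ M * Bv := by
      calc ((starRingEnd ℂ) (u zs) * ((n:ℂ) * u zs + zs * deriv u zs)).re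
          ≤ ‖(starRingEnd ℂ) (u zs) * ((n:ℂ) * u zs + zs * deriv u zs)‖ :=
            Complex.re_le_norm _
        _ = M * Bv := by rw [norm_mul, Complex.norm_conj, ← hM, ← hBv]
    have h3 : ((starRingEnd ℂ) (u zs) * ((n:ℂ) * u zs + zs * deriv u zs)).re
        = ((starRingEnd ℂ) (u zs) * ((n:ℂ) * u zs)).re
          + ((starRingEnd ℂ) (u zs) * (zs * deriv u zs)).re := by
      rw [mul_add, Complex.add_re]
    have h4 : (n:ℝ)*M^2 ≤ M * Bv := by linarith
    have h5 : M * ((n:ℝ)*M) ≤ M * Bv := by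
      calc M * ((n:ℝ)*M) = (n:ℝ)*M^2 := by ring
        _ ≤ M * Bv := h4
    exact le_of_mul_le_mul_left h5 hMpos
  -- plug the max point into the main inequality
  have hiq := hineq zs hzs1 hzs0
  rw [hI1 zs hzs1 hzs0, hI2 zs hzs1 hzs0] at hiq
  have habs1 : ‖zs^n * u zs‖ = r^n * M := by
    rw [norm_mul, norm_pow, hzs_abs, ← hM]
  have habs2 : ‖(p:ℂ) * (zs^n * ((n:ℂ) * u zs + zs * deriv u zs))‖
      = (p:ℝ) * (r^n * Bv) := by
    rw [norm_mul, norm_mul, norm_pow, hzs_abs, Complex.norm_natCast, ← hBv]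
  rw [habs1, habs2] at hiq
  have hpR : (0:ℝ) < p := by exact_mod_cast hp
  have hnR : (0:ℝ) < n := by exact_mod_cast hn
  have hA0 : (0:ℝ) < r^n * M := by positivity
  have hBle : ((p:ℝ)*(n:ℝ)) * (r^n * M) ≤ (p:ℝ) * (r^n * Bv) := by
    calc ((p:ℝ)*(n:ℝ)) * (r^n * M) = (p:ℝ)*r^n*((n:ℝ)*M) := by ring
      _ ≤ (p:ℝ)*r^n*Bv := mul_le_mul_of_nonneg_left hkey (by positivity)
      _ = (p:ℝ) * (r^n * Bv) := by ring
  have hmono : (((p:ℝ)*(n:ℝ)) * (r^n*M))^γ ≤ ((p:ℝ) * (r^n*Bv))^γ :=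
    Real.rpow_le_rpow (by positivity) hBle hγ
  have hchain : ((p:ℝ)*(n:ℝ))^γ * (r^n*M)^(β+γ) < ((p:ℝ)*(n:ℝ))^γ * ((1-α)^(β+γ)/2^(β+2*γ)) := by
    have e1 : (((p:ℝ)*(n:ℝ)) * (r^n*M))^γ = ((p:ℝ)*(n:ℝ))^γ * (r^n*M)^γ :=
      Real.mul_rpow (by positivity) (by positivity)
    have e2 : (r^n*M)^(β+γ) = (r^n*M)^β * (r^n*M)^γ := Real.rpow_add hA0 β γ
    have e : ((p:ℝ)*(n:ℝ))^γ * (r^n*M)^(β+γ) = (r^n*M)^β * (((p:ℝ)*(n:ℝ)) * (r^n*M))^γ := by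
      rw [e1, e2]; ring
    rw [e]
    calc (r^n*M)^β * (((p:ℝ)*(n:ℝ)) * (r^n*M))^γ
        ≤ (r^n*M)^β * ((p:ℝ) * (r^n*Bv))^γ := by
          exact mul_le_mul_of_nonneg_left hmono (Real.rpow_nonneg (by positivity) β)
      _ < ((p:ℝ)*(n:ℝ))^γ * ((1-α)^(β+γ)/2^(β+2*γ)) := by
          rw [mul_div_assoc] at hiq
          exact hiq
  have hcancel : (r^n*M)^(β+γ) < (1-α)^(β+γ)/2^(β+2*γ) := by
    have hpn : (0:ℝ) < ((p:ℝ)*(n:ℝ))^γ := Real.rpow_pos_of_pos (by positivity) γ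
    exact (mul_lt_mul_iff_right₀ hpn).1 hchain
  have hlt : r^n * M < dd := by
    by_contra hcon
    push_neg at hcon
    have := Real.rpow_le_rpow hdd_pos.le hcon (le_of_lt hβγ)
    rw [hdd_eq] at this
    linarith
  apply main
  have h1 : ‖z^n * u z‖ ≤ r^n * M := by
    rw [norm_mul, norm_pow]
    have hzn : ‖z‖ ^ n ≤ r^n := pow_le_pow_left₀ (norm_nonneg z) hzr.le n
    exact mul_le_mul hzn hMz (norm_nonneg _) (by positivity)
  linarith
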